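/- Fix t ∈ ℝ and bounded z ∈ ℂ, τ ∈ ℝ. Let φ(r₁,r₂,r₃) = A(exp(r₁X̃₁+r₂X̃₂+r₃X̃₃)·n(z,τ)·a(t)) where A is the Iwasawa A-projection on U(2,1). Then the gradient at the origin satisfies ∇φ(0,0,0) = (2 Im(z), −2 Re(z), τ). In particular |∇φ(0,0,0)|² = 4|z|² + τ². -/

import Mathlib

open Matrix Complex

noncomputable section

def Jmat : Matrix (Fin 3) (Fin 3) ℂ := !![0,0,1;0,1,0;1,0,0]

def nmat (z : ℂ) (τ : ℝ) : Matrix (Fin 3) (Fin 3) ℂ :=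
  !![1, (Real.sqrt 2 : ℂ) * z, (τ : ℂ) * I - (normSq z : ℂ);
     0, 1, -(Real.sqrt 2 : ℂ) * starRingEnd ℂ z;
     0, 0, 1]

def amat (t : ℝ) : Matrix (Fin 3) (Fin 3) ℂ :=
  !![(Real.exp (t/2) : ℂ), 0, 0; 0, 1, 0; 0, 0, (Real.exp (-t/2) : ℂ)]

def U21 : Set (Matrix (Fin 3) (Fin 3) ℂ) := {g | gᴴ * Jmat * g = Jmat}

def Nset : Set (Matrix (Fin 3) (Fin 3) ℂ) := {x | ∃ z τ, x = nmat z τ}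

def K0 : Set (Matrix (Fin 3) (Fin 3) ℂ) := {g | gᴴ * Jmat * g = Jmat ∧ gᴴ * g = 1}

def Xt1 : Matrix (Fin 3) (Fin 3) ℂ :=
  ((Real.sqrt 2 : ℂ))⁻¹ • !![0, I, 0; I, 0, I; 0, I, 0]

def Xt2 : Matrix (Fin 3) (Fin 3) ℂ :=
  ((Real.sqrt 2 : ℂ))⁻¹ • !![0, -1, 0; 1, 0, 1; 0, -1, 0]

def Xt3 : Matrix (Fin 3) (Fin 3) ℂ :=
  (2 : ℂ)⁻¹ • !![I, 0, I; 0, -2*I, 0; I, 0, I]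

namespace GradAux

open NormedSpace

attribute [local instance] Matrix.linftyOpNormedRing Matrix.linftyOpNormedAlgebra

abbrev Mat := Matrix (Fin 3) (Fin 3) ℂ

lemma nmat_mem (z : ℂ) (τ : ℝ) : nmat z τ ∈ U21 := by
  have h2 : (Real.sqrt 2 : ℝ) * Real.sqrt 2 = 2 := Real.mul_self_sqrt (by norm_num)
  show (nmat z τ)ᴴ * Jmat * nmat z τ = Jmat
  ext i j
  fin_cases i <;> fin_cases j <;>
    simp [nmat, Jmat, Matrix.mul_apply, Fin.sum_univ_three, conjTranspose_apply,
      Matrix.vecHead, Matrix.vecTail, Complex.ext_iff, Complex.normSq_apply] <;>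
    (constructor <;> nlinarith [h2])

lemma amat_mem (t : ℝ) : amat t ∈ U21 := by
  show (amat t)ᴴ * Jmat * amat t = Jmat
  ext i j
  fin_cases i <;> fin_cases j <;>
    simp [amat, Jmat, Matrix.mul_apply, Fin.sum_univ_three, conjTranspose_apply,
      Matrix.vecHead, Matrix.vecTail, -Complex.ofReal_exp, ← Complex.ofReal_mul,
      ← Real.exp_add] <;> ring

lemma mul_mem {g g' : Mat} (hg : g ∈ U21) (hg' : g' ∈ U21) : g * g' ∈ U21 := by
  have e1 : gᴴ * Jmat * g = Jmat := hg
  have e2 : g'ᴴ * Jmat * g' = Jmat := hg'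
  show (g * g')ᴴ * Jmat * (g * g') = Jmat
  rw [conjTranspose_mul]
  have h : g'ᴴ * gᴴ * Jmat * (g * g') = g'ᴴ * (gᴴ * Jmat * g) * g' := by
    simp only [mul_assoc]
  rw [h, e1, e2]

lemma exp_mem (X : Mat) (hX : Xᴴ = -X) (hc : Jmat * X = X * Jmat) (r : ℝ) :
    exp (r • X) ∈ U21 := by
  show (exp (r • X))ᴴ * Jmat * exp (r • X) = Jmat
  have h1 : (exp (r • X))ᴴ = exp (-(r • X)) := by
    rw [← Matrix.exp_conjTranspose]
    congr 1
    rw [conjTranspose_smul, hX]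
    simp
  have hcX : Commute Jmat X := hc
  have hcomm : Commute Jmat (-(r • X)) := (hcX.smul_right r).neg_right
  have h2 : Jmat * exp (-(r • X)) = exp (-(r • X)) * Jmat :=
    hcomm.exp_right.eq
  have h3 : exp (-(r • X)) * exp (r • X) = 1 := by
    rw [← Matrix.exp_add_of_commute (-(r • X)) (r • X)
        (Commute.neg_left (Commute.refl (r • X))),
      neg_add_cancel, NormedSpace.exp_zero]
  rw [h1, show exp (-(r • X)) * Jmat = Jmat * exp (-(r • X)) from h2.symm,
    mul_assoc, h3, mul_one]

lemma key (AA : Mat → ℝ) (κ : Mat → Mat)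
    (hdec : ∀ g ∈ U21, κ g ∈ K0 ∧ ∃ n ∈ Nset, g = n * amat (AA g) * κ g)
    {g : Mat} (hg : g ∈ U21) :
    Real.exp (-(AA g)) = ∑ j, Complex.normSq (g 2 j) := by
  obtain ⟨hk, n, ⟨z', τ', rfl⟩, hgd⟩ := hdec g hg
  have hk2 : κ g * (κ g)ᴴ = 1 := mul_eq_one_comm.mp hk.2
  have hsum : ∑ j, Complex.normSq (κ g 2 j) = 1 := by
    have h := congrFun (congrFun hk2 2) 2
    simp only [Matrix.mul_apply, conjTranspose_apply, Matrix.one_apply_eq] at h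
    have : (∑ j, (Complex.normSq (κ g 2 j) : ℂ)) = 1 := by
      rw [← h]; congr 1; funext j
      rw [← Complex.mul_conj]
      rfl
    exact_mod_cast this
  have hrow : ∀ j, g 2 j = (Real.exp (-(AA g)/2) : ℂ) * κ g 2 j := by
    intro j
    conv_lhs => rw [hgd]
    simp [nmat, amat, Matrix.mul_apply, Fin.sum_univ_three, Matrix.vecHead,
      Matrix.vecTail, neg_div]
  have e3 : Real.exp (-(AA g)) = Real.exp (-(AA g)/2) * Real.exp (-(AA g)/2) * 1 := by
    rw [← Real.exp_add, mul_one]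
    congr 1
    ring
  rw [e3, ← hsum, Finset.mul_sum]
  congr 1
  funext j
  rw [hrow j, Complex.normSq_mul, Complex.normSq_ofReal]
  all_goals ring

lemma deriv_AA (AA : Mat → ℝ) (κ : Mat → Mat)
    (hdec : ∀ g ∈ U21, κ g ∈ K0 ∧ ∃ n ∈ Nset, g = n * amat (AA g) * κ g)
    (X : Mat) (hX : Xᴴ = -X) (hc : Jmat * X = X * Jmat) (z : ℂ) (τ t : ℝ) :
    deriv (fun r : ℝ => AA (exp (r • X) * nmat z τ * amat t)) 0
      = -(2 * (X 2 0 * ((τ:ℂ) * I - (normSq z : ℂ))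
          + X 2 1 * (-(Real.sqrt 2 : ℂ) * starRingEnd ℂ z) + X 2 2).re) := by
  set M : Mat := nmat z τ * amat t with hMdef
  have hmem : ∀ r : ℝ, exp (r • X) * nmat z τ * amat t ∈ U21 := fun r =>
    mul_mem (mul_mem (exp_mem X hX hc r) (nmat_mem z τ)) (amat_mem t)
  have hfun : (fun r : ℝ => AA (exp (r • X) * nmat z τ * amat t))
      = fun r : ℝ => -Real.log (∑ j, Complex.normSq ((exp (r • X) * M) 2 j)) := by
    funext r
    have h := key AA κ hdec (hmem r)
    rw [mul_assoc, ← hMdef] at h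
    rw [mul_assoc, ← hMdef]
    rw [← h, Real.log_exp, neg_neg]
  have hE : HasDerivAt (fun r : ℝ => exp (r • X)) X 0 := by
    have h := hasDerivAt_exp_smul_const (𝕂 := ℝ) X 0
    simp at h
    exact h
  have hexp0 : exp ((0:ℝ) • X) = 1 := by simp [NormedSpace.exp_zero]
  have hent : ∀ j : Fin 3,
      HasDerivAt (fun r : ℝ => (exp (r • X) * M) 2 j) ((X * M) 2 j) 0 := by
    intro j
    let L : Mat →ₗ[ℝ] ℂ :=
      { toFun := fun A => (A * M) 2 j
        map_add' := fun A B => by simp [Matrix.add_mul]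
        map_smul' := fun r A => by simp [Matrix.smul_mul] }
    have := (LinearMap.toContinuousLinearMap L).hasFDerivAt.comp_hasDerivAt 0 hE
    simp [L, Function.comp] at this
    exact this
  have hφ : HasDerivAt (fun r : ℝ => ∑ j, Complex.normSq ((exp (r • X) * M) 2 j))
      (∑ j : Fin 3, (2 * (M 2 j).re * ((X * M) 2 j).re
        + 2 * (M 2 j).im * ((X * M) 2 j).im)) 0 := by
    apply HasDerivAt.fun_sum
    intro j _
    have hre : HasDerivAt (fun r : ℝ => ((exp (r • X) * M) 2 j).re) ((X * M) 2 j).re 0 :=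
      Complex.reCLM.hasFDerivAt.comp_hasDerivAt 0 (hent j)
    have him : HasDerivAt (fun r : ℝ => ((exp (r • X) * M) 2 j).im) ((X * M) 2 j).im 0 :=
      Complex.imCLM.hasFDerivAt.comp_hasDerivAt 0 (hent j)
    have h := (hre.fun_mul hre).fun_add (him.fun_mul him)
    simp only [hexp0, Matrix.one_mul] at h
    have heq : (fun r : ℝ => Complex.normSq ((exp (r • X) * M) 2 j))
        = fun r : ℝ => ((exp (r • X) * M) 2 j).re * ((exp (r • X) * M) 2 j).re
          + ((exp (r • X) * M) 2 j).im * ((exp (r • X) * M) 2 j).im := by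
      funext r; rw [Complex.normSq_apply]
    rw [heq]
    convert h using 1
    ring
  -- entries of M
  have hM20 : M 2 0 = 0 := by
    simp [hMdef, nmat, amat, Matrix.mul_apply, Fin.sum_univ_three, Matrix.vecHead, Matrix.vecTail]
  have hM21 : M 2 1 = 0 := by
    simp [hMdef, nmat, amat, Matrix.mul_apply, Fin.sum_univ_three, Matrix.vecHead, Matrix.vecTail]
  have hM22 : M 2 2 = (Real.exp (-t/2) : ℂ) := by
    simp [hMdef, nmat, amat, Matrix.mul_apply, Fin.sum_univ_three, Matrix.vecHead, Matrix.vecTail]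
  have hM02 : M 0 2 = ((τ:ℂ) * I - (normSq z : ℂ)) * (Real.exp (-t/2) : ℂ) := by
    simp [hMdef, nmat, amat, Matrix.mul_apply, Fin.sum_univ_three, Matrix.vecHead, Matrix.vecTail]
  have hM12 : M 1 2 = (-(Real.sqrt 2 : ℂ) * starRingEnd ℂ z) * (Real.exp (-t/2) : ℂ) := by
    simp [hMdef, nmat, amat, Matrix.mul_apply, Fin.sum_univ_three, Matrix.vecHead, Matrix.vecTail]
  set w : ℂ := X 2 0 * ((τ:ℂ) * I - (normSq z : ℂ))
      + X 2 1 * (-(Real.sqrt 2 : ℂ) * starRingEnd ℂ z) + X 2 2 with hw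
  have hXM : (X * M) 2 2 = w * (Real.exp (-t/2) : ℂ) := by
    rw [Matrix.mul_apply, Fin.sum_univ_three, hM02, hM12, hM22, hw]
    ring
  have hD : (∑ j : Fin 3, (2 * (M 2 j).re * ((X * M) 2 j).re
        + 2 * (M 2 j).im * ((X * M) 2 j).im))
      = 2 * Real.exp (-t/2) * (Real.exp (-t/2) * w.re) := by
    rw [Fin.sum_univ_three, hM20, hM21, hM22, hXM]
    simp [Complex.mul_re, Complex.ofReal_re, Complex.ofReal_im, -Complex.ofReal_exp]
    ring
  have hφ0 : (∑ j, Complex.normSq ((exp ((0:ℝ) • X) * M) 2 j))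
      = Real.exp (-t/2) * Real.exp (-t/2) := by
    rw [hexp0, Matrix.one_mul, Fin.sum_univ_three, hM20, hM21, hM22]
    simp [Complex.normSq_ofReal, -Complex.ofReal_exp]
  have hne : Real.exp (-t/2) * Real.exp (-t/2) ≠ 0 :=
    mul_ne_zero (Real.exp_ne_zero _) (Real.exp_ne_zero _)
  have hlog : HasDerivAt
      (fun r : ℝ => -Real.log (∑ j, Complex.normSq ((exp (r • X) * M) 2 j)))
      (-((2 * Real.exp (-t/2) * (Real.exp (-t/2) * w.re))
        / (Real.exp (-t/2) * Real.exp (-t/2)))) 0 := by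
    have := (hφ.log (by rw [hφ0]; exact hne)).neg
    rw [hD] at this
    rw [hφ0] at this
    exact this
  rw [hfun, hlog.deriv]
  rw [show 2 * Real.exp (-t/2) * (Real.exp (-t/2) * w.re)
      = (2 * w.re) * (Real.exp (-t/2) * Real.exp (-t/2)) by ring,
    mul_div_assoc, div_self hne, mul_one]

end GradAux

theorem gradient_of_A_projection_along_K
    (AA : Matrix (Fin 3) (Fin 3) ℂ → ℝ)
    (κ : Matrix (Fin 3) (Fin 3) ℂ → Matrix (Fin 3) (Fin 3) ℂ)
    (hdec : ∀ g ∈ U21, κ g ∈ K0 ∧ ∃ n ∈ Nset, g = n * amat (AA g) * κ g)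
    (huniq : ∀ n ∈ Nset, ∀ n' ∈ Nset, ∀ (t t' : ℝ), ∀ k ∈ K0, ∀ k' ∈ K0,
      n * amat t * k = n' * amat t' * k' → t = t' ∧ k = k')
    (z : ℂ) (τ t : ℝ) :
    deriv (fun r : ℝ => AA (NormedSpace.exp (r • Xt1) * nmat z τ * amat t)) 0 = 2 * z.im ∧
    deriv (fun r : ℝ => AA (NormedSpace.exp (r • Xt2) * nmat z τ * amat t)) 0 = -(2 * z.re) ∧
    deriv (fun r : ℝ => AA (NormedSpace.exp (r • Xt3) * nmat z τ * amat t)) 0 = τ ∧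
    (2 * z.im)^2 + (-(2 * z.re))^2 + τ^2 = 4 * normSq z + τ^2 := by
  have h2 : (Real.sqrt 2 : ℝ) * Real.sqrt 2 = 2 := Real.mul_self_sqrt (by norm_num)
  have hX1s : Xt1ᴴ = -Xt1 := by
    ext i j; fin_cases i <;> fin_cases j <;>
      simp [Xt1, conjTranspose_apply, Matrix.vecHead, Matrix.vecTail]
  have hX1c : Jmat * Xt1 = Xt1 * Jmat := by
    ext i j; fin_cases i <;> fin_cases j <;>
      simp [Xt1, Jmat, Matrix.mul_apply, Fin.sum_univ_three, Matrix.vecHead, Matrix.vecTail]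
  have hX2s : Xt2ᴴ = -Xt2 := by
    ext i j; fin_cases i <;> fin_cases j <;>
      simp [Xt2, conjTranspose_apply, Matrix.vecHead, Matrix.vecTail]
  have hX2c : Jmat * Xt2 = Xt2 * Jmat := by
    ext i j; fin_cases i <;> fin_cases j <;>
      simp [Xt2, Jmat, Matrix.mul_apply, Fin.sum_univ_three, Matrix.vecHead, Matrix.vecTail]
  have hX3s : Xt3ᴴ = -Xt3 := by
    ext i j; fin_cases i <;> fin_cases j <;>
      simp [Xt3, conjTranspose_apply, Matrix.vecHead, Matrix.vecTail]
  have hX3c : Jmat * Xt3 = Xt3 * Jmat := by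
    ext i j; fin_cases i <;> fin_cases j <;>
      simp [Xt3, Jmat, Matrix.mul_apply, Fin.sum_univ_three, Matrix.vecHead, Matrix.vecTail]
  refine ⟨?_, ?_, ?_, ?_⟩
  have hs : ((Real.sqrt 2 : ℂ)) ≠ 0 :=
    Complex.ofReal_ne_zero.mpr (by positivity)
  · rw [GradAux.deriv_AA AA κ hdec Xt1 hX1s hX1c z τ t]
    have h20 : Xt1 2 0 = 0 := by simp [Xt1, Matrix.vecHead, Matrix.vecTail]
    have h21 : Xt1 2 1 = ((Real.sqrt 2 : ℂ))⁻¹ * I := by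
      simp [Xt1, Matrix.vecHead, Matrix.vecTail]
    have h22 : Xt1 2 2 = 0 := by simp [Xt1, Matrix.vecHead, Matrix.vecTail]
    rw [h20, h21, h22]
    have e : ((0 : ℂ) * ((τ:ℂ) * I - (normSq z : ℂ))
        + ((Real.sqrt 2 : ℂ))⁻¹ * I * (-(Real.sqrt 2 : ℂ) * starRingEnd ℂ z) + 0)
        = -(I * starRingEnd ℂ z) := by
      field_simp
      ring
    rw [e]
    simp [Complex.mul_re, Complex.conj_re, Complex.conj_im]
  · rw [GradAux.deriv_AA AA κ hdec Xt2 hX2s hX2c z τ t]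
    have h20 : Xt2 2 0 = 0 := by simp [Xt2, Matrix.vecHead, Matrix.vecTail]
    have h21 : Xt2 2 1 = ((Real.sqrt 2 : ℂ))⁻¹ * (-1) := by
      simp [Xt2, Matrix.vecHead, Matrix.vecTail]
    have h22 : Xt2 2 2 = 0 := by simp [Xt2, Matrix.vecHead, Matrix.vecTail]
    rw [h20, h21, h22]
    have e : ((0 : ℂ) * ((τ:ℂ) * I - (normSq z : ℂ))
        + ((Real.sqrt 2 : ℂ))⁻¹ * (-1) * (-(Real.sqrt 2 : ℂ) * starRingEnd ℂ z) + 0)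
        = starRingEnd ℂ z := by
      field_simp
      ring
    rw [e]
    simp [Complex.conj_re]
  · rw [GradAux.deriv_AA AA κ hdec Xt3 hX3s hX3c z τ t]
    have h20 : Xt3 2 0 = (2:ℂ)⁻¹ * I := by simp [Xt3, Matrix.vecHead, Matrix.vecTail]
    have h21 : Xt3 2 1 = 0 := by simp [Xt3, Matrix.vecHead, Matrix.vecTail]
    have h22 : Xt3 2 2 = (2:ℂ)⁻¹ * I := by simp [Xt3, Matrix.vecHead, Matrix.vecTail]
    rw [h20, h21, h22]
    simp [Complex.mul_re, Complex.mul_im, Complex.add_re, Complex.sub_re,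
      Complex.sub_im, Complex.normSq_apply]
  · rw [Complex.normSq_apply]; ring

end
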